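/- Under the identity A S(t) - S(t) A* = i Π(t) Π(t)*, if S(t) is invertible and c ∈ ℝ is not an eigenvalue of A, then the transfer matrix w_A(t,c) := I_m - i Π(t)* S(t)^{-1} (A - c I_n)^{-1} Π(t) is unitary, i.e., w_A(t,c) w_A(t,c)* = I_m. -/
import Mathlib


open Matrix

set_option maxHeartbeats 1000000 in
/-- Under `A S - S A* = i P P*`, with `S = S*` invertible and real `c ∉ σ(A)`,
the transfer matrix `w_A(c) = I - i P* S⁻¹ (A - cI)⁻¹ P` is unitary. -/
theorem stmt1 {n m : ℕ} (A S : Matrix (Fin n) (Fin n) ℂ) (P : Matrix (Fin n) (Fin m) ℂ)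
    (c : ℝ)
    (hSherm : S.IsHermitian) (hSinv : IsUnit S.det)
    (hc : IsUnit (A - (c : ℂ) • (1 : Matrix (Fin n) (Fin n) ℂ)).det)
    (hid : A * S - S * Aᴴ = Complex.I • (P * Pᴴ)) :
    ((1 : Matrix (Fin m) (Fin m) ℂ) - Complex.I • (Pᴴ * S⁻¹ * (A - (c : ℂ) • 1)⁻¹ * P)) *
      ((1 : Matrix (Fin m) (Fin m) ℂ) - Complex.I • (Pᴴ * S⁻¹ * (A - (c : ℂ) • 1)⁻¹ * P))ᴴ
      = 1 := by
  set B : Matrix (Fin n) (Fin n) ℂ := A - (c : ℂ) • 1 with hBdef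
  have hBH : Bᴴ = Aᴴ - (c : ℂ) • 1 := by
    simp [hBdef, conjTranspose_sub, conjTranspose_smul, Complex.conj_ofReal]
  have hBHdet : IsUnit Bᴴ.det := by
    rw [det_conjTranspose]; exact hc.star
  have hid2 : B * S - S * Bᴴ = Complex.I • (P * Pᴴ) := by
    rw [hBdef, hBH, sub_mul, mul_sub, smul_mul_assoc, mul_smul_comm, one_mul, mul_one,
      ← hid]
    abel
  have hBi : B⁻¹ * B = 1 := nonsing_inv_mul B hc
  have hBHi : Bᴴ * Bᴴ⁻¹ = 1 := mul_nonsing_inv Bᴴ hBHdet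
  have hSi : S⁻¹ * S = 1 := nonsing_inv_mul S hSinv
  have hSi' : S * S⁻¹ = 1 := mul_nonsing_inv S hSinv
  have l1 : ∀ {k : ℕ} (M : Matrix (Fin n) (Fin k) ℂ), S⁻¹ * (S * M) = M := fun M => by
    rw [← Matrix.mul_assoc, hSi, Matrix.one_mul]
  have l2 : ∀ {k : ℕ} (M : Matrix (Fin n) (Fin k) ℂ), S * (S⁻¹ * M) = M := fun M => by
    rw [← Matrix.mul_assoc, hSi', Matrix.one_mul]
  have key : B⁻¹ * (P * Pᴴ) * Bᴴ⁻¹ = (-Complex.I) • (S * Bᴴ⁻¹ - B⁻¹ * S) := by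
    have h1 : B⁻¹ * (Complex.I • (P * Pᴴ)) * Bᴴ⁻¹ = B⁻¹ * (B * S - S * Bᴴ) * Bᴴ⁻¹ := by
      rw [hid2]
    have h2 : B⁻¹ * (B * S - S * Bᴴ) * Bᴴ⁻¹ = S * Bᴴ⁻¹ - B⁻¹ * S := by
      rw [mul_sub, sub_mul, ← mul_assoc, ← mul_assoc, hBi, one_mul,
        mul_assoc (B⁻¹ * S), hBHi, mul_one]
    rw [mul_smul_comm, smul_mul_assoc] at h1
    have h3 := congrArg (fun M => (-Complex.I) • M) (h1.trans h2)
    simpa [smul_smul, Complex.I_mul_I] using h3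
  have hwH : ((1 : Matrix (Fin m) (Fin m) ℂ) - Complex.I • (Pᴴ * S⁻¹ * B⁻¹ * P))ᴴ
      = 1 + Complex.I • (Pᴴ * Bᴴ⁻¹ * S⁻¹ * P) := by
    rw [conjTranspose_sub, conjTranspose_smul, conjTranspose_one]
    simp only [conjTranspose_mul, conjTranspose_conjTranspose, conjTranspose_nonsing_inv,
      Complex.star_def, Complex.conj_I, neg_smul, sub_neg_eq_add]
    simp only [hSherm.eq, Matrix.mul_assoc]
  rw [hwH]
  set X := Pᴴ * S⁻¹ * B⁻¹ * P with hX
  set Y := Pᴴ * Bᴴ⁻¹ * S⁻¹ * P with hY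
  have e1 : Pᴴ * S⁻¹ * (S * Bᴴ⁻¹) * S⁻¹ * P = Y := by
    rw [hY]; simp only [Matrix.mul_assoc, l1]
  have e2 : Pᴴ * S⁻¹ * (B⁻¹ * S) * S⁻¹ * P = X := by
    rw [hX]; simp only [Matrix.mul_assoc, l2]
  have hXY : X * Y = Complex.I • X - Complex.I • Y := by
    have e0 : X * Y = Pᴴ * S⁻¹ * (B⁻¹ * (P * Pᴴ) * Bᴴ⁻¹) * S⁻¹ * P := by
      rw [hX, hY]; simp only [Matrix.mul_assoc]
    have e3 : Pᴴ * S⁻¹ * (S * Bᴴ⁻¹ - B⁻¹ * S) * S⁻¹ * P = Y - X := by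
      rw [Matrix.mul_sub, Matrix.sub_mul, Matrix.sub_mul, e1, e2]
    rw [e0, key, Matrix.mul_smul, Matrix.smul_mul, Matrix.smul_mul, e3, smul_sub,
      neg_smul, neg_smul, neg_sub_neg]
  rw [Matrix.mul_add, Matrix.mul_one, Matrix.sub_mul, Matrix.one_mul, Matrix.smul_mul,
    Matrix.mul_smul, smul_smul, Complex.I_mul_I, neg_one_smul, hXY]
  abel
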